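/- Let f be a continuous nonnegative probability density supported on [0, ∞) with cdf F and finite mean E[w], with 0 < F(u) < 1 for all u > 0. Then for every u > 0, X_B(u) ≥ u − E[w]; consequently X_B(u) → +∞ as u → +∞. -/

import Mathlib

open MeasureTheory

/-- For every u > 0, X_B(u) ≥ u − E[w]; consequently X_B(u) → +∞ as
u → +∞. -/
theorem XB_limit_atTop (f : ℝ → ℝ) (hcont : ContinuousOn f (Set.Ici 0))
    (hnn : ∀ w, 0 ≤ f w) (hsupp : ∀ w, w < 0 → f w = 0)
    (hint : IntegrableOn f (Set.Ici 0))
    (htotal : (∫ w in Set.Ici (0:ℝ), f w) = 1)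
    (hmean : IntegrableOn (fun w => w * f w) (Set.Ici 0))
    (F : ℝ → ℝ) (hF : ∀ u, F u = ∫ w in (0:ℝ)..u, f w)
    (hFio : ∀ u, 0 < u → 0 < F u ∧ F u < 1) :
    (∀ u, 0 < u →
      u - (∫ w in Set.Ici (0:ℝ), w * f w) ≤
        (∫ w in Set.Ici u, (1 - F w)) / (1 - F u) + (∫ w in (0:ℝ)..u, F w) / F u) ∧
    Filter.Tendsto
      (fun u => (∫ w in Set.Ici u, (1 - F w)) / (1 - F u) +
        (∫ w in (0:ℝ)..u, F w) / F u)
      Filter.atTop Filter.atTop := by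
  -- global integrability of f
  have hintf : Integrable f := by
    have h1 : IntegrableOn f (Set.Iio 0) :=
      (integrableOn_congr_fun (g := fun _ => (0:ℝ)) (fun x hx => hsupp x hx)
        measurableSet_Iio).mpr integrableOn_zero
    have h2 := h1.union hint
    rwa [Set.Iio_union_Ici, integrableOn_univ] at h2
  -- global integrability of w * f w
  have hintwf : Integrable (fun w => w * f w) := by
    have h1 : IntegrableOn (fun w => w * f w) (Set.Iio 0) :=
      (integrableOn_congr_fun (g := fun _ => (0:ℝ))
        (fun x hx => by simp [hsupp x hx]) measurableSet_Iio).mpr integrableOn_zero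
    have h2 := h1.union hmean
    rwa [Set.Iio_union_Ici, integrableOn_univ] at h2
  have hii : ∀ a b : ℝ, IntervalIntegrable f volume a b :=
    fun a b => hintf.intervalIntegrable
  have hFeq : F = fun w => ∫ t in (0:ℝ)..w, f t := funext hF
  have hFc : Continuous F := by
    rw [hFeq]; exact intervalIntegral.continuous_primitive hii 0
  have hFset : ∀ u : ℝ, 0 ≤ u → F u = ∫ w in Set.Ioc 0 u, f w := fun u hu => by
    rw [hF, intervalIntegral.integral_of_le hu]
  have hF1 : ∀ w : ℝ, 0 ≤ w → F w ≤ 1 := by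
    intro w hw
    rw [hFset w hw, ← htotal]
    exact setIntegral_mono_set hint (Filter.Eventually.of_forall fun x => hnn x)
      (HasSubset.Subset.eventuallyLE (fun x hx => le_of_lt hx.1))
  have hFnn : ∀ w : ℝ, 0 ≤ w → 0 ≤ F w := by
    intro w hw
    rw [hFset w hw]
    exact setIntegral_nonneg measurableSet_Ioc fun x _ => hnn x
  -- FTC: derivative of F
  have hFderiv : ∀ x : ℝ, 0 < x → HasDerivAt F (f x) x := by
    intro x hx
    rw [hFeq]
    exact intervalIntegral.integral_hasDerivAt_right (hii 0 x)
      ⟨Set.univ, Filter.univ_mem, hintf.aestronglyMeasurable.restrict⟩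
      (hcont.continuousAt (Ici_mem_nhds hx))
  -- integration by parts
  have hIBP : ∀ u : ℝ, 0 < u →
      (∫ w in (0:ℝ)..u, w * f w) = u * F u - ∫ w in (0:ℝ)..u, F w := by
    intro u hu
    have h := intervalIntegral.integral_eq_sub_of_hasDeriv_right_of_le
      (f := fun w => w * F w) (f' := fun w => F w + w * f w) hu.le
      ((continuous_id.mul hFc).continuousOn)
      (fun x hx => by
        have := ((hasDerivAt_id x).mul (hFderiv x hx.1)).hasDerivWithinAt
          (s := Set.Ioi x)
        convert this using 1
        · rfl
        simp only [id_eq]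
        ring)
      (((hFc.intervalIntegrable 0 u)).add (hintwf.intervalIntegrable))
    rw [intervalIntegral.integral_add (hFc.intervalIntegrable 0 u)
      (hintwf.intervalIntegrable)] at h
    have h' : (∫ x in (0:ℝ)..u, F x) + (∫ x in (0:ℝ)..u, x * f x)
        = u * F u - 0 * F 0 := h
    have h0 : (0:ℝ) * F 0 = 0 := by ring
    rw [h0, sub_zero] at h'
    linarith
  -- splitting the mean
  have hsplit : ∀ u : ℝ, 0 < u →
      (∫ w in Set.Ici (0:ℝ), w * f w) =
        (∫ w in (0:ℝ)..u, w * f w) + ∫ w in Set.Ioi u, w * f w := by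
    intro u hu
    rw [integral_Ici_eq_integral_Ioi, ← Set.Ioc_union_Ioi_eq_Ioi hu.le,
      setIntegral_union (Set.Ioc_disjoint_Ioi le_rfl) measurableSet_Ioi
        hintwf.integrableOn hintwf.integrableOn,
      intervalIntegral.integral_of_le hu.le]
  -- tail bound
  have htail : ∀ u : ℝ, 0 < u → u * (1 - F u) ≤ ∫ w in Set.Ioi u, w * f w := by
    intro u hu
    have h1 : (∫ w in Set.Ici (0:ℝ), f w) = F u + ∫ w in Set.Ioi u, f w := by
      rw [integral_Ici_eq_integral_Ioi, ← Set.Ioc_union_Ioi_eq_Ioi hu.le,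
        setIntegral_union (Set.Ioc_disjoint_Ioi le_rfl) measurableSet_Ioi
          hintf.integrableOn hintf.integrableOn, hFset u hu.le]
    rw [htotal] at h1
    have h2 : (1:ℝ) - F u = ∫ w in Set.Ioi u, f w := by linarith
    rw [h2, ← integral_const_mul]
    refine setIntegral_mono_on ((hintf.integrableOn).const_mul u)
      hintwf.integrableOn measurableSet_Ioi fun x hx => ?_
    exact mul_le_mul_of_nonneg_right (le_of_lt hx) (hnn x)
  -- key inequality: u - E ≤ ∫₀ᵘ F
  have hkey : ∀ u : ℝ, 0 < u →
      u - (∫ w in Set.Ici (0:ℝ), w * f w) ≤ ∫ w in (0:ℝ)..u, F w := by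
    intro u hu
    have h1 := hIBP u hu
    have h2 := hsplit u hu
    have h3 := htail u hu
    have h4 : u * (1 - F u) = u - u * F u := by ring
    linarith
  -- nonnegativity of the upper-tail term
  have hA : ∀ u : ℝ, 0 < u → 0 ≤ ∫ w in Set.Ici u, (1 - F w) := by
    intro u hu
    refine setIntegral_nonneg measurableSet_Ici fun x hx => ?_
    have := hF1 x (le_trans hu.le hx)
    linarith
  -- main inequality
  have hmain : ∀ u, 0 < u →
      u - (∫ w in Set.Ici (0:ℝ), w * f w) ≤
        (∫ w in Set.Ici u, (1 - F w)) / (1 - F u) + (∫ w in (0:ℝ)..u, F w) / F u := by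
    intro u hu
    obtain ⟨hF0u, hF1u⟩ := hFio u hu
    have hB := hkey u hu
    have hBnn : 0 ≤ ∫ w in (0:ℝ)..u, F w :=
      intervalIntegral.integral_nonneg hu.le fun x hx => hFnn x hx.1
    have h1 : (∫ w in (0:ℝ)..u, F w) ≤ (∫ w in (0:ℝ)..u, F w) / F u := by
      rw [le_div_iff₀ hF0u]
      nlinarith
    have h2 : 0 ≤ (∫ w in Set.Ici u, (1 - F w)) / (1 - F u) :=
      div_nonneg (hA u hu) (by linarith)
    linarith
  refine ⟨hmain, ?_⟩
  have hlow : Filter.Tendsto (fun u : ℝ => u - (∫ w in Set.Ici (0:ℝ), w * f w))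
      Filter.atTop Filter.atTop := by
    simpa only [sub_eq_add_neg, id_eq] using
      Filter.tendsto_atTop_add_const_right Filter.atTop
        (-(∫ w in Set.Ici (0:ℝ), w * f w)) Filter.tendsto_id
  refine Filter.tendsto_atTop_mono' _ ?_ hlow
  filter_upwards [Filter.eventually_gt_atTop (0:ℝ)] with u hu using hmain u hu
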